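/- For all real numbers a and b, log(1 + exp(a+b)) − log(1 + exp(a)) − G(a)·b ≥ G(a)·(1 − G(a))·(b²/2 − |b|³/6). -/

import Mathlib

/-- The logistic link function `G(t) = exp t / (1 + exp t)`. -/
noncomputable def logistic (t : ℝ) : ℝ := Real.exp t / (1 + Real.exp t)

noncomputable def Dlog (t : ℝ) : ℝ := Real.exp t / (1 + Real.exp t) ^ 2

lemma one_add_exp_pos (t : ℝ) : 0 < 1 + Real.exp t := by positivity

lemma Dlog_pos (t : ℝ) : 0 < Dlog t := by unfold Dlog; positivity

lemma logistic_mul (t : ℝ) : logistic t * (1 - logistic t) = Dlog t := by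
  unfold logistic Dlog
  have h := (one_add_exp_pos t).ne'
  field_simp
  ring

lemma Dlog_exp_le (t s : ℝ) : Dlog t * Real.exp (-|s|) ≤ Dlog (t + s) := by
  unfold Dlog
  rw [div_mul_eq_mul_div, div_le_div_iff₀ (by positivity) (by positivity)]
  rcases abs_cases s with ⟨hs, hs0⟩ | ⟨hs, hs0⟩
  · rw [hs]
    have hv : 1 ≤ Real.exp s := Real.one_le_exp hs0
    have key : 1 + Real.exp (t + s) ≤ Real.exp s * (1 + Real.exp t) := by
      rw [Real.exp_add]; nlinarith [Real.exp_pos t]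
    have h1 : Real.exp t * Real.exp (-s) * (1 + Real.exp (t + s)) ^ 2
        ≤ Real.exp t * Real.exp (-s) * (Real.exp s * (1 + Real.exp t)) ^ 2 := by
      have h2 : (0:ℝ) ≤ 1 + Real.exp (t + s) := le_of_lt (one_add_exp_pos _)
      have h3 := pow_le_pow_left₀ h2 key 2
      have h4 : (0:ℝ) ≤ Real.exp t * Real.exp (-s) := by positivity
      exact mul_le_mul_of_nonneg_left h3 h4
    calc Real.exp t * Real.exp (-s) * (1 + Real.exp (t + s)) ^ 2
        ≤ Real.exp t * Real.exp (-s) * (Real.exp s * (1 + Real.exp t)) ^ 2 := h1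
      _ = (Real.exp t * Real.exp (-s) * Real.exp s * Real.exp s) * (1 + Real.exp t) ^ 2 := by
          ring
      _ = Real.exp (t + s) * (1 + Real.exp t) ^ 2 := by
          rw [← Real.exp_add, ← Real.exp_add, ← Real.exp_add]
          ring_nf
  · rw [hs]
    have key : Real.exp (t + s) ≤ Real.exp t := Real.exp_le_exp.2 (by linarith)
    have h1 : (1 + Real.exp (t + s)) ^ 2 ≤ (1 + Real.exp t) ^ 2 := by
      have := Real.exp_pos (t + s); nlinarith
    have h2 : Real.exp t * Real.exp (- -s) = Real.exp (t + s) := by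
      rw [← Real.exp_add]; ring_nf
    rw [h2]
    have := Real.exp_pos (t + s)
    nlinarith

lemma Dlog_ge (t s : ℝ) : Dlog t * (1 - |s|) ≤ Dlog (t + s) := by
  have h1 : 1 - |s| ≤ Real.exp (-|s|) := by
    have := Real.add_one_le_exp (-|s|); linarith
  calc Dlog t * (1 - |s|) ≤ Dlog t * Real.exp (-|s|) :=
        mul_le_mul_of_nonneg_left h1 (Dlog_pos t).le
    _ ≤ Dlog (t + s) := Dlog_exp_le t s

lemma hasDerivAt_logPart (a x : ℝ) :
    HasDerivAt (fun x => Real.log (1 + Real.exp (a + x))) (logistic (a + x)) x := by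
  have h1 : HasDerivAt (fun x : ℝ => a + x) 1 x := by
    simpa using (hasDerivAt_id x).const_add a
  have h2 : HasDerivAt (fun x : ℝ => Real.exp (a + x)) (Real.exp (a + x)) x := by
    simpa [Function.comp_def] using (Real.hasDerivAt_exp (a + x)).comp x h1
  have h3 : HasDerivAt (fun x : ℝ => 1 + Real.exp (a + x)) (Real.exp (a + x)) x := by
    simpa using h2.const_add 1
  have h4 := h3.log (one_add_exp_pos (a + x)).ne'
  simpa [logistic] using h4

lemma hasDerivAt_logistic (a x : ℝ) :
    HasDerivAt (fun x => logistic (a + x)) (Dlog (a + x)) x := by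
  have h1 : HasDerivAt (fun x : ℝ => a + x) 1 x := by
    simpa using (hasDerivAt_id x).const_add a
  have h2 : HasDerivAt (fun x : ℝ => Real.exp (a + x)) (Real.exp (a + x)) x := by
    simpa [Function.comp_def] using (Real.hasDerivAt_exp (a + x)).comp x h1
  have h3 : HasDerivAt (fun x : ℝ => 1 + Real.exp (a + x)) (Real.exp (a + x)) x := by
    simpa using h2.const_add 1
  have h4 := h2.div h3 (one_add_exp_pos (a + x)).ne'
  have heq : (Real.exp (a + x) * (1 + Real.exp (a + x)) -
      Real.exp (a + x) * Real.exp (a + x)) / (1 + Real.exp (a + x)) ^ 2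
      = Dlog (a + x) := by
    unfold Dlog; ring_nf
  rw [heq] at h4
  exact h4

/-- Per-observation quadratic-minus-cubic minoration of the logistic log-partition
function (Step 2 of the proof of the Minoration Lemma): for all `a b : ℝ`,
`log(1+exp(a+b)) − log(1+exp a) − G(a)·b ≥ G(a)·(1−G(a))·(b²/2 − |b|³/6)`. -/
theorem logistic_logPartition_minoration (a b : ℝ) :
    Real.log (1 + Real.exp (a + b)) - Real.log (1 + Real.exp a) - logistic a * b
      ≥ logistic a * (1 - logistic a) * (b ^ 2 / 2 - |b| ^ 3 / 6) := by
  rw [logistic_mul]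
  set C := Dlog a with hC
  rcases le_or_gt 0 b with hb | hb
  · -- b ≥ 0 case
    rw [abs_of_nonneg hb]
    set g : ℝ → ℝ := fun x => logistic (a + x) - logistic a - C * (x - x ^ 2 / 2) with hg
    set f : ℝ → ℝ := fun x => Real.log (1 + Real.exp (a + x)) - Real.log (1 + Real.exp a)
      - logistic a * x - C * (x ^ 2 / 2 - x ^ 3 / 6) with hf
    have hgd : ∀ x : ℝ, HasDerivAt g (Dlog (a + x) - C * (1 - x)) x := by
      intro x
      have h1 := (hasDerivAt_logistic a x).sub_const (logistic a)
      have h2 : HasDerivAt (fun x : ℝ => C * (x - x ^ 2 / 2)) (C * (1 - x)) x := by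
        have : HasDerivAt (fun x : ℝ => x - x ^ 2 / 2) (1 - x) x := by
          have := ((hasDerivAt_pow 2 x).div_const 2)
          have h := (hasDerivAt_id x).sub this
          simpa [Pi.sub_def] using h
        simpa using this.const_mul C
      exact h1.sub h2
    have hfd : ∀ x : ℝ, HasDerivAt f (g x) x := by
      intro x
      have h1 := (hasDerivAt_logPart a x).sub_const (Real.log (1 + Real.exp a))
      have h2 : HasDerivAt (fun x : ℝ => logistic a * x) (logistic a) x := by
        simpa using (hasDerivAt_id x).const_mul (logistic a)
      have h3 : HasDerivAt (fun x : ℝ => C * (x ^ 2 / 2 - x ^ 3 / 6)) (C * (x - x ^ 2 / 2)) x := by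
        have ha : HasDerivAt (fun x : ℝ => x ^ 2 / 2 - x ^ 3 / 6) (x - x ^ 2 / 2) x := by
          have hp2 := (hasDerivAt_pow 2 x).div_const 2
          have hp3 := (hasDerivAt_pow 3 x).div_const 6
          have h : HasDerivAt (fun x : ℝ => x ^ 2 / 2 - x ^ 3 / 6) _ x := hp2.sub hp3
          convert h using 1
          ring
        simpa using ha.const_mul C
      have : HasDerivAt f _ x := (h1.sub h2).sub h3
      convert this using 1
      try simp [hg]
      try ring
    -- g is monotone on Ici 0
    have hgmono : MonotoneOn g (Set.Ici 0) := by
      apply monotoneOn_of_deriv_nonneg (convex_Ici 0)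
      · exact fun x _ => (hgd x).continuousAt.continuousWithinAt
      · intro x _; exact ((hgd x).differentiableAt).differentiableWithinAt
      · intro x hx
        rw [interior_Ici] at hx
        rw [(hgd x).deriv]
        have := Dlog_ge a x
        rw [abs_of_nonneg (le_of_lt hx)] at this
        linarith
    have hg0 : g 0 = 0 := by simp [hg]
    have hgnonneg : ∀ x ∈ Set.Ici (0:ℝ), 0 ≤ g x := by
      intro x hx
      have := hgmono (Set.self_mem_Ici) hx hx
      rw [hg0] at this; exact this
    have hfmono : MonotoneOn f (Set.Ici 0) := by
      apply monotoneOn_of_deriv_nonneg (convex_Ici 0)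
      · exact fun x _ => (hfd x).continuousAt.continuousWithinAt
      · intro x _; exact ((hfd x).differentiableAt).differentiableWithinAt
      · intro x hx
        rw [interior_Ici] at hx
        rw [(hfd x).deriv]
        exact hgnonneg x (Set.mem_Ici.2 (le_of_lt (Set.mem_Ioi.1 hx)))
    have hf0 : f 0 = 0 := by simp [hf]
    have := hfmono (Set.self_mem_Ici) hb hb
    rw [hf0] at this
    have hfb : f b = Real.log (1 + Real.exp (a + b)) - Real.log (1 + Real.exp a)
      - logistic a * b - C * (b ^ 2 / 2 - b ^ 3 / 6) := rfl
    rw [hfb] at this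
    linarith
  · -- b < 0 case
    rw [abs_of_neg hb]
    set g : ℝ → ℝ := fun x => logistic (a + x) - logistic a - C * (x + x ^ 2 / 2) with hg
    set f : ℝ → ℝ := fun x => Real.log (1 + Real.exp (a + x)) - Real.log (1 + Real.exp a)
      - logistic a * x - C * (x ^ 2 / 2 + x ^ 3 / 6) with hf
    have hgd : ∀ x : ℝ, HasDerivAt g (Dlog (a + x) - C * (1 + x)) x := by
      intro x
      have h1 := (hasDerivAt_logistic a x).sub_const (logistic a)
      have h2 : HasDerivAt (fun x : ℝ => C * (x + x ^ 2 / 2)) (C * (1 + x)) x := by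
        have : HasDerivAt (fun x : ℝ => x + x ^ 2 / 2) (1 + x) x := by
          have := ((hasDerivAt_pow 2 x).div_const 2)
          have h := (hasDerivAt_id x).add this
          simpa [Pi.add_def] using h
        simpa using this.const_mul C
      exact h1.sub h2
    have hfd : ∀ x : ℝ, HasDerivAt f (g x) x := by
      intro x
      have h1 := (hasDerivAt_logPart a x).sub_const (Real.log (1 + Real.exp a))
      have h2 : HasDerivAt (fun x : ℝ => logistic a * x) (logistic a) x := by
        simpa using (hasDerivAt_id x).const_mul (logistic a)
      have h3 : HasDerivAt (fun x : ℝ => C * (x ^ 2 / 2 + x ^ 3 / 6)) (C * (x + x ^ 2 / 2)) x := by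
        have ha : HasDerivAt (fun x : ℝ => x ^ 2 / 2 + x ^ 3 / 6) (x + x ^ 2 / 2) x := by
          have hp2 := (hasDerivAt_pow 2 x).div_const 2
          have hp3 := (hasDerivAt_pow 3 x).div_const 6
          have h : HasDerivAt (fun x : ℝ => x ^ 2 / 2 + x ^ 3 / 6) _ x := hp2.add hp3
          convert h using 1
          ring
        simpa using ha.const_mul C
      have : HasDerivAt f _ x := (h1.sub h2).sub h3
      convert this using 1
      try simp [hg]
      try ring
    have hgmono : MonotoneOn g (Set.Iic 0) := by
      apply monotoneOn_of_deriv_nonneg (convex_Iic 0)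
      · exact fun x _ => (hgd x).continuousAt.continuousWithinAt
      · intro x _; exact ((hgd x).differentiableAt).differentiableWithinAt
      · intro x hx
        rw [interior_Iic] at hx
        rw [(hgd x).deriv]
        have := Dlog_ge a x
        rw [abs_of_neg hx] at this
        linarith
    have hg0 : g 0 = 0 := by simp [hg]
    have hgnonpos : ∀ x ∈ Set.Iic (0:ℝ), g x ≤ 0 := by
      intro x hx
      have := hgmono hx (Set.self_mem_Iic) hx
      rw [hg0] at this; exact this
    have hfanti : AntitoneOn f (Set.Iic 0) := by
      apply antitoneOn_of_deriv_nonpos (convex_Iic 0)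
      · exact fun x _ => (hfd x).continuousAt.continuousWithinAt
      · intro x _; exact ((hfd x).differentiableAt).differentiableWithinAt
      · intro x hx
        rw [interior_Iic] at hx
        rw [(hfd x).deriv]
        exact hgnonpos x (Set.mem_Iic.2 (le_of_lt (Set.mem_Iio.1 hx)))
    have hf0 : f 0 = 0 := by simp [hf]
    have := hfanti (le_of_lt hb : b ≤ 0) (Set.self_mem_Iic) (le_of_lt hb)
    rw [hf0] at this
    have hfb : f b = Real.log (1 + Real.exp (a + b)) - Real.log (1 + Real.exp a)
      - logistic a * b - C * (b ^ 2 / 2 + b ^ 3 / 6) := rfl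
    rw [hfb] at this
    have heq : C * (b ^ 2 / 2 - (-b) ^ 3 / 6) = C * (b ^ 2 / 2 + b ^ 3 / 6) := by ring
    rw [heq]
    linarith
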